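/- arXiv:2603.07241 — 2 statements merged into one kernel-verified Lean document; each statement's English description precedes it below -/
import Mathlib

section
/- Let A and O be finite nonempty types. Let ν be a probability mass function on O (the distribution of observations), let π be a probability mass function on A (the prior) with π(a) > 0 for all a, let Δmax ≥ 0, and for each o ∈ O let λ(o) ∈ [0,1] (the relevance probability) and let μ₀(o) and μ₁(o) be probability mass functions on A (the relevance-conditioned posteriors). Define the posterior μ(o) pointwise by μ(o)(a) = λ(o)·μ₁(o)(a) + (1 − λ(o))·μ₀(o)(a). Assume: (i) for every o ∈ O, μ₀(o) = π (the irrelevant-observation posterior produces no posterior shift, i.e. D(μ₀(o) ‖ π) = 0); and (ii) for every o ∈ O with λ(o) > 0, D(μ₁(o) ‖ π) ≤ Δmax. Then the expected information gain in KL form is bounded by the expected relevance: ∑_{o ∈ O} ν(o) · D(μ(o) ‖ π) ≤ Δmax · ∑_{o ∈ O} ν(o) · λ(o). -/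
open scoped BigOperators

/-- Kullback–Leibler divergence `D(P ‖ Q) = ∑ a, P a * log (P a / Q a)` on a finite type,
with the convention `0 * log 0 = 0` (automatic since `0 * x = 0`). -/
noncomputable def klDiv {A : Type*} [Fintype A] (P Q : A → ℝ) : ℝ :=
  ∑ a, P a * Real.log (P a / Q a)

lemma kl_mix_le {A : Type*} [Fintype A] (π : A → ℝ) (hπ0 : ∀ a, 0 < π a)
    (p : A → ℝ) (hp : ∀ a, 0 ≤ p a) (l : ℝ) (hl0 : 0 ≤ l) (hl1 : l ≤ 1) :
    klDiv (fun a => l * p a + (1 - l) * π a) π ≤ l * klDiv p π := by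
  unfold klDiv
  rw [Finset.mul_sum]
  apply Finset.sum_le_sum
  intro a _
  have hπ := hπ0 a
  have hπne := hπ.ne'
  set x := p a / π a with hx
  have hxmem : x ∈ Set.Ici (0:ℝ) := div_nonneg (hp a) hπ.le
  have h1mem : (1:ℝ) ∈ Set.Ici (0:ℝ) := by norm_num
  have hconv := Real.convexOn_mul_log.2 hxmem h1mem hl0 (show (0:ℝ) ≤ 1 - l by linarith) (by ring)
  simp only [smul_eq_mul, Real.log_one, mul_zero, mul_one, add_zero] at hconv
  -- hconv : (l * x + (1 - l)) * Real.log (l * x + (1 - l)) ≤ l * (x * Real.log x)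
  have key : (l * p a + (1 - l) * π a) / π a = l * x + (1 - l) := by
    rw [hx]; field_simp
  have hmul := mul_le_mul_of_nonneg_left hconv hπ.le
  calc (l * p a + (1 - l) * π a) * Real.log ((l * p a + (1 - l) * π a) / π a)
      = π a * ((l * x + (1 - l)) * Real.log (l * x + (1 - l))) := by
        rw [key]
        have h2 : l * p a + (1 - l) * π a = π a * (l * x + (1 - l)) := by
          rw [hx]; field_simp
        rw [h2]; ring
    _ ≤ π a * (l * (x * Real.log x)) := hmul
    _ = l * (p a * Real.log (p a / π a)) := by
        rw [hx]
        field_simp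

/-- **EIG upper bound via relevance (Proposition 4.1, KL form).**
If the irrelevant-observation posterior `μ₀ o` equals the prior `π`, and for every
observation with positive relevance probability the relevant posterior satisfies
`D(μ₁ o ‖ π) ≤ Δmax`, then the expected KL divergence of the mixture posterior from the
prior is at most `Δmax` times the expected relevance. -/
theorem eig_upper_bound_via_relevance
    {A O : Type*} [Fintype A] [Fintype O] [Nonempty A] [Nonempty O]
    (ν : O → ℝ) (hν0 : ∀ o, 0 ≤ ν o) (hν1 : ∑ o, ν o = 1)
    (π : A → ℝ) (hπ0 : ∀ a, 0 < π a) (hπ1 : ∑ a, π a = 1)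
    (Δmax : ℝ) (hΔmax : 0 ≤ Δmax)
    (lam : O → ℝ) (hlam0 : ∀ o, 0 ≤ lam o) (hlam1 : ∀ o, lam o ≤ 1)
    (μ₀ μ₁ : O → A → ℝ)
    (hμ₀0 : ∀ o a, 0 ≤ μ₀ o a) (hμ₀1 : ∀ o, ∑ a, μ₀ o a = 1)
    (hμ₁0 : ∀ o a, 0 ≤ μ₁ o a) (hμ₁1 : ∀ o, ∑ a, μ₁ o a = 1)
    (μ : O → A → ℝ)
    (hμ : ∀ o a, μ o a = lam o * μ₁ o a + (1 - lam o) * μ₀ o a)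
    (h0 : ∀ o, μ₀ o = π)
    (h1 : ∀ o, 0 < lam o → klDiv (μ₁ o) π ≤ Δmax) :
    ∑ o, ν o * klDiv (μ o) π ≤ Δmax * ∑ o, ν o * lam o := by
  have key : ∀ o, klDiv (μ o) π ≤ lam o * Δmax := by
    intro o
    have hμeq : μ o = fun a => lam o * μ₁ o a + (1 - lam o) * π a := by
      funext a; rw [hμ o a, h0 o]
    rw [hμeq]
    have hb := kl_mix_le π hπ0 (μ₁ o) (hμ₁0 o) (lam o) (hlam0 o) (hlam1 o)
    refine hb.trans ?_
    rcases eq_or_lt_of_le (hlam0 o) with h | h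
    · simp [← h]
    · exact mul_le_mul_of_nonneg_left (h1 o h) (hlam0 o)
  calc ∑ o, ν o * klDiv (μ o) π
      ≤ ∑ o, ν o * (lam o * Δmax) := by
        apply Finset.sum_le_sum
        intro o _
        exact mul_le_mul_of_nonneg_left (key o) (hν0 o)
    _ = Δmax * ∑ o, ν o * lam o := by
        rw [Finset.mul_sum]; apply Finset.sum_congr rfl; intros; ring
end

section
/- Let A and O be finite nonempty types. Let ν be a probability mass function on O (the distribution of observations), let Δmax ≥ 0, and for each o ∈ O let λ(o) ∈ [0,1] (the relevance probability) and let μ₀(o) and μ₁(o) be probability mass functions on A (the relevance-conditioned posteriors). Define the posterior μ(o) pointwise by μ(o)(a) = λ(o)·μ₁(o)(a) + (1 − λ(o))·μ₀(o)(a), and define the prior π as the ν-mixture of the posteriors: π(a) = ∑_{o} ν(o) · μ(o)(a). Assume π(a) > 0 for all a, and assume: (i) μ₀(o) = π for every o ∈ O; and (ii) D(μ₁(o) ‖ π) ≤ Δmax for every o ∈ O with λ(o) > 0. Then the expected entropy reduction is bounded by the expected relevance: H(π) − ∑_{o} ν(o) · H(μ(o)) ≤ Δmax · ∑_{o} ν(o)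 · λ(o). -/
open scoped BigOperators

/-- Shannon entropy `H(P) = -∑ x, P x * log (P x)` on a finite type, with the convention
`0 * log 0 = 0` (automatic since `0 * x = 0`). -/
noncomputable def entropy {A : Type*} [Fintype A] (P : A → ℝ) : ℝ :=
  -∑ a, P a * Real.log (P a)

lemma ptwise (t p₁ q : ℝ) (ht0 : 0 ≤ t) (ht1 : t ≤ 1) (hp₁ : 0 ≤ p₁) (hq : 0 < q) :
    (t * p₁ + (1 - t) * q) * Real.log ((t * p₁ + (1 - t) * q) / q)
      ≤ t * (p₁ * Real.log (p₁ / q)) := by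
  have hconv := Real.convexOn_mul_log
  have hab : t + (1 - t) = 1 := by ring
  have h := hconv.2 (show p₁ / q ∈ Set.Ici (0:ℝ) from Set.mem_Ici.2 (div_nonneg hp₁ hq.le))
    (show (1:ℝ) ∈ Set.Ici (0:ℝ) by norm_num) ht0 (by linarith) hab
  simp only [smul_eq_mul, Real.log_one, mul_one, mul_zero, add_zero] at h
  have hq' : q ≠ 0 := hq.ne'
  have hx : t * (p₁ / q) + (1 - t) = (t * p₁ + (1 - t) * q) / q := by field_simp
  rw [hx] at h
  have := mul_le_mul_of_nonneg_left h hq.le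
  calc (t * p₁ + (1 - t) * q) * Real.log ((t * p₁ + (1 - t) * q) / q)
      = q * ((t * p₁ + (1 - t) * q) / q * Real.log ((t * p₁ + (1 - t) * q) / q)) := by
        field_simp
    _ ≤ q * (t * (p₁ / q * Real.log (p₁ / q))) := this
    _ = t * (p₁ * Real.log (p₁ / q)) := by field_simp

/-- **EIG upper bound via relevance (entropy form).** When the prior `π` is the
`ν`-mixture of the posteriors `μ o` (Bayesian consistency), the expected entropy reduction
`H(π) - ∑ o, ν o * H(μ o)` is bounded by `Δmax` times the expected relevance, under the
assumptions that irrelevant observations produce no posterior shift (`μ₀ o = π`) and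
relevant observations satisfy `D(μ₁ o ‖ π) ≤ Δmax`. -/
theorem eig_entropy_upper_bound_via_relevance
    {A O : Type*} [Fintype A] [Fintype O] [Nonempty A] [Nonempty O]
    (ν : O → ℝ) (hν0 : ∀ o, 0 ≤ ν o) (hν1 : ∑ o, ν o = 1)
    (Δmax : ℝ) (hΔmax : 0 ≤ Δmax)
    (lam : O → ℝ) (hlam0 : ∀ o, 0 ≤ lam o) (hlam1 : ∀ o, lam o ≤ 1)
    (μ₀ μ₁ : O → A → ℝ)
    (hμ₀0 : ∀ o a, 0 ≤ μ₀ o a) (hμ₀1 : ∀ o, ∑ a, μ₀ o a = 1)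
    (hμ₁0 : ∀ o a, 0 ≤ μ₁ o a) (hμ₁1 : ∀ o, ∑ a, μ₁ o a = 1)
    (μ : O → A → ℝ)
    (hμ : ∀ o a, μ o a = lam o * μ₁ o a + (1 - lam o) * μ₀ o a)
    (π : A → ℝ) (hπ : ∀ a, π a = ∑ o, ν o * μ o a)
    (hπpos : ∀ a, 0 < π a)
    (h0 : ∀ o, μ₀ o = π)
    (h1 : ∀ o, 0 < lam o → klDiv (μ₁ o) π ≤ Δmax) :
    entropy π - ∑ o, ν o * entropy (μ o) ≤ Δmax * ∑ o, ν o * lam o := by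
  have key : ∀ o, klDiv (μ o) π ≤ lam o * Δmax := by
    intro o
    rcases eq_or_lt_of_le (hlam0 o) with hl | hl
    · have hzero : klDiv (μ o) π = 0 := by
        unfold klDiv
        apply Finset.sum_eq_zero
        intro a _
        have h : μ o a = π a := by rw [hμ, h0, ← hl]; ring
        rw [h, div_self (hπpos a).ne', Real.log_one, mul_zero]
      rw [hzero, ← hl]; simp
    · calc klDiv (μ o) π ≤ lam o * klDiv (μ₁ o) π := by
            unfold klDiv
            rw [Finset.mul_sum]
            apply Finset.sum_le_sum
            intro a _
            have h := ptwise (lam o) (μ₁ o a) (π a) (hlam0 o) (hlam1 o) (hμ₁0 o a) (hπpos a)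
            rw [hμ, h0]
            linarith [h]
        _ ≤ lam o * Δmax := mul_le_mul_of_nonneg_left (h1 o hl) hl.le
  have hμ0 : ∀ o a, 0 ≤ μ o a := by
    intro o a
    rw [hμ]
    exact add_nonneg (mul_nonneg (hlam0 o) (hμ₁0 o a))
      (mul_nonneg (by linarith [hlam1 o]) (hμ₀0 o a))
  have hsplit : ∀ o, klDiv (μ o) π
      = (∑ a, μ o a * Real.log (μ o a)) - ∑ a, μ o a * Real.log (π a) := by
    intro o
    unfold klDiv
    rw [← Finset.sum_sub_distrib]
    apply Finset.sum_congr rfl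
    intro a _
    rcases eq_or_lt_of_le (hμ0 o a) with h | h
    · rw [← h]; ring
    · rw [Real.log_div h.ne' (hπpos a).ne']; ring
  have hswap : ∑ o, ν o * ∑ a, μ o a * Real.log (π a) = ∑ a, π a * Real.log (π a) := by
    simp_rw [Finset.mul_sum]
    rw [Finset.sum_comm]
    apply Finset.sum_congr rfl
    intro a _
    rw [hπ a, Finset.sum_mul]
    apply Finset.sum_congr rfl
    intro o _
    ring
  have hA : entropy π - ∑ o, ν o * entropy (μ o) = ∑ o, ν o * klDiv (μ o) π := by
    symm
    calc ∑ o, ν o * klDiv (μ o) π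
        = ∑ o, (ν o * (∑ a, μ o a * Real.log (μ o a)) - ν o * ∑ a, μ o a * Real.log (π a)) := by
          apply Finset.sum_congr rfl; intro o _; rw [hsplit o]; ring
      _ = (∑ o, ν o * (∑ a, μ o a * Real.log (μ o a)))
            - ∑ o, ν o * ∑ a, μ o a * Real.log (π a) := Finset.sum_sub_distrib _ _
      _ = (∑ o, ν o * (∑ a, μ o a * Real.log (μ o a))) - ∑ a, π a * Real.log (π a) := by
          rw [hswap]
      _ = entropy π - ∑ o, ν o * entropy (μ o) := by
          simp only [entropy, mul_neg, Finset.sum_neg_distrib]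
          ring
  rw [hA]
  calc ∑ o, ν o * klDiv (μ o) π ≤ ∑ o, ν o * (lam o * Δmax) :=
        Finset.sum_le_sum fun o _ => mul_le_mul_of_nonneg_left (key o) (hν0 o)
    _ = Δmax * ∑ o, ν o * lam o := by
        rw [Finset.mul_sum]; apply Finset.sum_congr rfl; intro o _; ring
end
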